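/- There exist constants c, C > 0 such that c |λ_n|^{-3/2} e^{φ(λ_n)} ≤ |E'(λ_n)| ≤ C |λ_n|^{-3/2} e^{φ(λ_n)} for all n ≥ 0. -/

import Mathlib

set_option maxHeartbeats 1000000


open Complex

private lemma aux_gauss (n : ℕ) : ∑ i ∈ Finset.range n, ((i : ℝ) + 1) / 2 = n * (n + 1) / 4 := by
  induction n with
  | zero => simp
  | succ m ih => rw [Finset.sum_range_succ, ih]; push_cast; ring

/-- `x_j = e^{-(j+1)/2}` -/
noncomputable def auxX (j : ℕ) : ℝ := Real.exp (-(((j : ℝ) + 1) / 2))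

noncomputable def auxL (j : ℕ) : ℝ := Real.log (1 - auxX j)

noncomputable def auxU (j : ℕ) : ℝ := Real.log (1 + auxX j)

lemma auxX_pos (j : ℕ) : 0 < auxX j := Real.exp_pos _

lemma auxX_le (j : ℕ) : auxX j ≤ 2 / 3 := by
  have h1 : auxX j ≤ Real.exp (-(1 / 2 : ℝ)) := by
    apply Real.exp_le_exp.2
    have : (0:ℝ) ≤ j := Nat.cast_nonneg j
    linarith
  have h2 : Real.exp (-(1 / 2 : ℝ)) ≤ 2 / 3 := by
    rw [Real.exp_neg]
    rw [inv_le_comm₀ (Real.exp_pos _) (by norm_num)]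
    calc ((2:ℝ)/3)⁻¹ = 3/2 := by norm_num
    _ = 1/2 + 1 := by norm_num
    _ ≤ Real.exp (1/2) := Real.add_one_le_exp _
  linarith

lemma auxX_eq_pow (j : ℕ) : auxX j = Real.exp (-(1/2 : ℝ)) ^ (j + 1) := by
  rw [← Real.exp_nat_mul]
  unfold auxX
  congr 1
  push_cast
  ring

lemma auxX_summable : Summable auxX := by
  have h := summable_geometric_of_lt_one (le_of_lt (Real.exp_pos (-(1/2:ℝ))))
    (by rw [Real.exp_lt_one_iff]; norm_num)
  have := h.mul_left (Real.exp (-(1/2:ℝ)))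
  apply this.congr
  intro j
  rw [auxX_eq_pow, pow_succ]
  ring

lemma auxL_nonpos (j : ℕ) : auxL j ≤ 0 := by
  apply Real.log_nonpos
  · have := auxX_le j; linarith
  · have := auxX_pos j; linarith

lemma auxU_nonneg (j : ℕ) : 0 ≤ auxU j := by
  apply Real.log_nonneg
  have := auxX_pos j; linarith

lemma auxL_summable : Summable auxL := by
  have key : ∀ j, -auxL j ≤ 3 * auxX j := by
    intro j
    have hx := auxX_pos j
    have hx2 := auxX_le j
    have h3 : (0:ℝ) < 1 - auxX j := by linarith
    unfold auxL
    rw [← Real.log_inv]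
    have := Real.log_le_sub_one_of_pos (x := (1 - auxX j)⁻¹) (by positivity)
    have h4 : (1 - auxX j)⁻¹ - 1 = auxX j / (1 - auxX j) := by field_simp; ring
    have h5 : auxX j / (1 - auxX j) ≤ 3 * auxX j := by
      rw [div_le_iff₀ h3]
      nlinarith
    linarith
  have hsum : Summable (fun j => -auxL j) := by
    apply Summable.of_nonneg_of_le (fun j => by simpa using auxL_nonpos j) key
    exact auxX_summable.mul_left 3
  simpa using hsum.neg

lemma auxU_summable : Summable auxU := by
  apply Summable.of_nonneg_of_le auxU_nonneg (fun j => ?_) auxX_summable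
  unfold auxU
  have := Real.add_one_le_exp (auxX j)
  calc Real.log (1 + auxX j) ≤ (1 + auxX j) - 1 :=
        Real.log_le_sub_one_of_pos (by have := auxX_pos j; linarith)
  _ = auxX j := by ring

/-- key pointwise bound: if `|w| = e^s`, `s ≠ 0`, then
`log(1-e^{-|s|}) ≤ log|1-w| - max s 0 ≤ log(1+e^{-|s|})`. -/
lemma aux_logbound {w : ℂ} {s : ℝ} (hs : s ≠ 0) (hw : ‖w‖ = Real.exp s) :
    Real.log (1 - Real.exp (-|s|)) ≤ Real.log (‖1 - w‖) - max s 0 ∧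
    Real.log (‖1 - w‖) - max s 0 ≤ Real.log (1 + Real.exp (-|s|)) := by
  have habs_low : |Real.exp s - 1| ≤ ‖1 - w‖ := by
    have h := abs_norm_sub_norm_le w 1
    rw [abs_sub_comm] at h
    simp only [norm_one, hw] at h
    calc |Real.exp s - 1| = |1 - Real.exp s| := (abs_sub_comm _ _).symm
    _ ≤ ‖w - 1‖ := h
    _ = ‖1 - w‖ := norm_sub_rev w 1
  have habs_high : ‖1 - w‖ ≤ 1 + Real.exp s := by
    calc ‖1 - w‖ ≤ ‖(1:ℂ)‖ + ‖w‖ := by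
          exact norm_sub_le 1 w
    _ = 1 + Real.exp s := by rw [norm_one, hw]
  rcases lt_or_gt_of_ne hs with hneg | hpos
  · -- s < 0 : |w| = e^s < 1
    have habs : |s| = -s := abs_of_neg hneg
    have hmax : max s 0 = 0 := max_eq_right hneg.le
    have hes : Real.exp s < 1 := Real.exp_lt_one_iff.2 hneg
    have hlow : 1 - Real.exp s ≤ ‖1 - w‖ := by
      have : 1 - Real.exp s ≤ |Real.exp s - 1| := by
        rw [abs_sub_comm]; exact le_abs_self _
      linarith [habs_low]
    have hpos1 : (0:ℝ) < 1 - Real.exp s := by linarith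
    constructor
    · rw [hmax, habs, neg_neg, sub_zero]
      exact Real.log_le_log hpos1 hlow
    · rw [hmax, habs, neg_neg, sub_zero]
      exact Real.log_le_log (lt_of_lt_of_le hpos1 hlow) habs_high
  · -- s > 0 : |w| = e^s > 1
    have habs : |s| = s := abs_of_pos hpos
    have hmax : max s 0 = s := max_eq_left hpos.le
    have hes : 1 < Real.exp s := by have := Real.add_one_le_exp s; linarith
    have hlow : Real.exp s - 1 ≤ ‖1 - w‖ := by
      have : Real.exp s - 1 ≤ |Real.exp s - 1| := le_abs_self _
      linarith [habs_low]
    have hfac : Real.exp s - 1 = Real.exp s * (1 - Real.exp (-s)) := by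
      rw [Real.exp_neg]
      field_simp
    have hfac2 : 1 + Real.exp s = Real.exp s * (1 + Real.exp (-s)) := by
      rw [Real.exp_neg]
      field_simp
      ring
    have hpos1 : (0:ℝ) < Real.exp s - 1 := by linarith
    have hposfac : (0:ℝ) < 1 - Real.exp (-s) := by
      have : Real.exp (-s) < 1 := Real.exp_lt_one_iff.2 (by linarith)
      linarith
    constructor
    · rw [hmax, habs]
      have h1 : Real.log (Real.exp s * (1 - Real.exp (-s))) ≤ Real.log (‖1 - w‖) :=
        Real.log_le_log (by rw [← hfac]; exact hpos1) (by rw [← hfac]; exact hlow)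
      rw [Real.log_mul (Real.exp_ne_zero s) (ne_of_gt hposfac), Real.log_exp] at h1
      linarith
    · rw [hmax, habs]
      have h1 : Real.log (‖1 - w‖) ≤ Real.log (Real.exp s * (1 + Real.exp (-s))) :=
        Real.log_le_log (lt_of_lt_of_le hpos1 hlow) (by rw [← hfac2]; exact habs_high)
      rw [Real.log_mul (Real.exp_ne_zero s) (by positivity), Real.log_exp] at h1
      linarith

/-- `|E'(λ_n)| ≍ |λ_n|^{-3/2} e^{φ(λ_n)}` where `φ(z) = (log⁺|z|)²`,
`λ_n = exp((n+1)/2 + iθ_n)` and `E(z) = ∏ (1 - z/λ_n)`. -/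
theorem derivative_estimate_at_zeros (θ : ℕ → ℝ)
    (lam : ℕ → ℂ) (hlam : ∀ n, lam n = Complex.exp (((n + 1 : ℝ) / 2 : ℂ) + (θ n : ℂ) * Complex.I))
    (φ : ℂ → ℝ) (hφ : ∀ z, φ z = (max (Real.log (‖z‖)) 0) ^ 2)
    (E : ℂ → ℂ) (hE : ∀ z, E z = ∏' n : ℕ, (1 - z / lam n)) :
    ∃ c C : ℝ, 0 < c ∧ 0 < C ∧ ∀ n : ℕ,
      c * (‖lam n‖) ^ (-(3 : ℝ) / 2) * Real.exp (φ (lam n))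
        ≤ ‖deriv E (lam n)‖ ∧
      ‖deriv E (lam n)‖
        ≤ C * (‖lam n‖) ^ (-(3 : ℝ) / 2) * Real.exp (φ (lam n)) := by
  classical
  set rr : ℝ := Real.exp (-(1/2 : ℝ)) with hrr
  refine ⟨Real.exp (2 * ∑' j, auxL j), Real.exp (2 * ∑' j, auxU j),
    Real.exp_pos _, Real.exp_pos _, fun n => ?_⟩
  -- basic facts about lam
  have habs : ∀ k : ℕ, ‖lam k‖ = Real.exp (((k : ℝ) + 1) / 2) := by
    intro k
    rw [hlam, Complex.norm_exp]
    congr 1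
    simp
  have hne : ∀ k, lam k ≠ 0 := fun k => by rw [hlam]; exact Complex.exp_ne_zero _
  have hratio : ∀ j k : ℕ, ‖lam j / lam k‖ = Real.exp (((j : ℝ) - k) / 2) := by
    intro j k
    rw [norm_div, habs, habs, ← Real.exp_sub]
    congr 1; ring
  have hfacne : ∀ k : ℕ, k ≠ n → (1 : ℂ) - lam n / lam k ≠ 0 := by
    intro k hk h0
    have h2 : lam n / lam k = 1 := (sub_eq_zero.1 h0).symm
    have h1 : ‖lam n / lam k‖ = 1 := by rw [h2, norm_one]
    rw [hratio] at h1
    have h3 : ((n:ℝ) - k)/2 = 0 := (Real.exp_eq_one_iff _).1 h1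
    have h4 : (n:ℝ) = k := by linarith
    exact hk (Nat.cast_injective h4).symm
  set M : ℕ := n + 4 with hM
  set R : ℝ := Real.exp (((n : ℝ) + 1) / 2) + 1 with hR
  set B : Set ℂ := Metric.ball (0 : ℂ) R with hB
  have hexp1 : (2:ℝ) ≤ Real.exp 1 := by have := Real.add_one_le_exp (1:ℝ); linarith
  have hexp2 : (4:ℝ) ≤ Real.exp 2 := by
    calc (4:ℝ) = 2 * 2 := by norm_num
    _ ≤ Real.exp 1 * Real.exp 1 := by nlinarith
    _ = Real.exp 2 := by rw [← Real.exp_add]; norm_num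
  have hzb : ∀ z ∈ B, ∀ j : ℕ, ‖z / lam (j + M)‖ ≤ 1/2 * rr ^ j := by
    intro z hz j
    rw [norm_div, habs, div_le_iff₀ (Real.exp_pos _)]
    have h1 : ‖z‖ < R := by
      simpa [hB, Metric.mem_ball, Complex.dist_eq] using hz
    have h3 : (1:ℝ) ≤ Real.exp (((n:ℝ)+1)/2) := Real.one_le_exp (by positivity)
    have hkey : 1/2 * rr ^ j * Real.exp ((((j + M : ℕ) : ℝ) + 1) / 2)
        = 1/2 * Real.exp ((((n:ℝ)+1)/2) + 2) := by
      rw [hrr, ← Real.exp_nat_mul, mul_assoc, ← Real.exp_add]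
      congr 2
      push_cast [hM]
      ring
    have h4 : R ≤ 1/2 * Real.exp ((((n:ℝ)+1)/2) + 2) := by
      rw [Real.exp_add]
      rw [hR]
      nlinarith [Real.exp_pos (((n:ℝ)+1)/2)]
    calc ‖z‖ ≤ R := h1.le
    _ ≤ 1/2 * Real.exp ((((n:ℝ)+1)/2) + 2) := h4
    _ = 1/2 * rr ^ j * Real.exp ((((j + M : ℕ) : ℝ) + 1) / 2) := hkey.symm
  have hrr1 : rr ≤ 1 := by rw [hrr]; exact Real.exp_le_one_iff.2 (by norm_num)
  have hrr0 : 0 ≤ rr := le_of_lt (Real.exp_pos _)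
  have hhalf : ∀ z ∈ B, ∀ j : ℕ, ‖z / lam (j + M)‖ ≤ 1/2 := by
    intro z hz j
    calc ‖z / lam (j + M)‖ ≤ 1/2 * rr ^ j := hzb z hz j
    _ ≤ 1/2 * 1 := by
        have := pow_le_one₀ hrr0 hrr1 (n := j)
        nlinarith
    _ = 1/2 := by norm_num
  have hfacne' : ∀ z ∈ B, ∀ j : ℕ, (1 : ℂ) - z / lam (j + M) ≠ 0 := by
    intro z hz j h0
    have h1 : z / lam (j + M) = 1 := (sub_eq_zero.1 h0).symm
    have := hhalf z hz j
    rw [h1, norm_one] at this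
    norm_num at this
  have hlognorm : ∀ z ∈ B, ∀ j : ℕ,
      ‖Complex.log (1 - z / lam (j + M))‖ ≤ 3/4 * rr ^ j := by
    intro z hz j
    have h1 : ‖-(z / lam (j + M))‖ ≤ 1/2 := by
      rw [norm_neg]; exact hhalf z hz j
    have h2 := Complex.norm_log_one_add_half_le_self h1
    rw [show (1 : ℂ) + -(z / lam (j + M)) = 1 - z / lam (j + M) by ring] at h2
    calc ‖Complex.log (1 - z / lam (j + M))‖ ≤ 3/2 * ‖-(z / lam (j + M))‖ := h2
    _ = 3/2 * ‖z / lam (j + M)‖ := by rw [norm_neg]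
    _ ≤ 3/2 * (1/2 * rr ^ j) := by nlinarith [hzb z hz j, norm_nonneg (z / lam (j + M))]
    _ = 3/4 * rr ^ j := by ring
  have hgeo : Summable (fun j : ℕ => 3/4 * rr ^ j) :=
    (summable_geometric_of_lt_one hrr0 (by
      rw [hrr]; exact Real.exp_lt_one_iff.2 (by norm_num))).mul_left _
  have hlogsum : ∀ z ∈ B, Summable (fun j => Complex.log (1 - z / lam (j + M))) := by
    intro z hz
    apply Summable.of_norm
    exact hgeo.of_nonneg_of_le (fun j => norm_nonneg _) (fun j => hlognorm z hz j)
  set g : ℂ → ℂ := fun z => ∑' j, Complex.log (1 - z / lam (j + M)) with hg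
  have hunif : TendstoUniformlyOn
      (fun (t : Finset ℕ) z => ∑ j ∈ t, Complex.log (1 - z / lam (j + M))) g Filter.atTop B :=
    tendstoUniformlyOn_tsum hgeo (fun j z hz => hlognorm z hz j)
  have hgd : DifferentiableOn ℂ g B := by
    apply hunif.tendstoLocallyUniformlyOn.differentiableOn ?_ Metric.isOpen_ball
    apply Filter.Eventually.of_forall
    intro t
    apply DifferentiableOn.fun_sum
    intro j _
    intro z hz
    apply DifferentiableAt.differentiableWithinAt
    apply DifferentiableAt.clog
    · exact (differentiableAt_id.div_const _).const_sub 1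
    · rw [Complex.mem_slitPlane_iff]
      left
      have h := hhalf z hz j
      have h2 : ((z / lam (j + M)).re) ≤ ‖z / lam (j + M)‖ := Complex.re_le_norm _
      simp only [Complex.sub_re, Complex.one_re]
      linarith
  have hprod : ∀ z ∈ B, E z = (∏ k ∈ Finset.range M, (1 - z / lam k)) * Complex.exp (g z) := by
    intro z hz
    have hmul : Multipliable (fun j => 1 - z / lam (j + M)) :=
      Complex.multipliable_of_summable_log (hlogsum z hz)
    have hexp := Complex.cexp_tsum_eq_tprod (fun j => hfacne' z hz j) (hlogsum z hz)
    rw [hE, ← Multipliable.prod_mul_tprod_nat_mul' (f := fun k => 1 - z / lam k) (k := M) hmul]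
    congr 1
    rw [hg]
    exact hexp.symm
  have hballmem : lam n ∈ B := by
    simp only [hB, Metric.mem_ball, Complex.dist_eq, sub_zero, habs n, hR]
    linarith
  have hnhds : B ∈ nhds (lam n) := Metric.isOpen_ball.mem_nhds hballmem
  set Qt : ℂ → ℂ := fun z => ∏ k ∈ (Finset.range M).erase n, (1 - z / lam k) with hQt
  have hnM : n ∈ Finset.range M := by rw [hM]; exact Finset.mem_range.2 (by omega)
  have hEeq : E =ᶠ[nhds (lam n)] fun z => (1 - z / lam n) * (Qt z * Complex.exp (g z)) := by
    apply Filter.eventuallyEq_of_mem hnhds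
    intro z hz
    rw [hprod z hz, ← Finset.mul_prod_erase _ _ hnM, mul_assoc]
  have hQtd : DifferentiableAt ℂ Qt (lam n) := by
    apply DifferentiableAt.fun_finsetProd
    intro k _
    exact (differentiableAt_id.div_const _).const_sub 1
  have hgda : DifferentiableAt ℂ (fun z => Complex.exp (g z)) (lam n) :=
    (hgd.differentiableAt hnhds).cexp
  have h2d : DifferentiableAt ℂ (fun z => Qt z * Complex.exp (g z)) (lam n) := hQtd.mul hgda
  have h1d : HasDerivAt (fun z => (1 : ℂ) - z / lam n) (-(1 / lam n)) (lam n) := by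
    simpa using ((hasDerivAt_id (lam n)).div_const (lam n)).const_sub 1
  have hD : HasDerivAt E (-(1 / lam n) * (Qt (lam n) * Complex.exp (g (lam n)))) (lam n) := by
    have hD0 := h1d.mul h2d.hasDerivAt
    rw [show (1 : ℂ) - lam n / lam n = 0 by rw [div_self (hne n)]; ring] at hD0
    simp only [zero_mul, add_zero] at hD0
    exact hD0.congr_of_eventuallyEq hEeq
  -- now the modulus computation
  set β : ℕ → ℝ := fun k => Real.log (‖1 - lam n / lam k‖) with hβ
  have hβpos : ∀ k, k ≠ n → 0 < ‖1 - lam n / lam k‖ := fun k hk =>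
    norm_pos_iff.mpr (hfacne k hk)
  have hgre : (g (lam n)).re = ∑' j, β (j + M) := by
    rw [hg]
    rw [Complex.re_tsum (hlogsum _ hballmem)]
    exact tsum_congr fun j => Complex.log_re _
  have habsD : ‖deriv E (lam n)‖ =
      Real.exp (-(((n : ℝ) + 1) / 2) + (∑ k ∈ (Finset.range M).erase n, β k + ∑' j, β (j + M))) := by
    rw [hD.deriv, norm_mul, norm_mul]
    have e1 : ‖-(1 / lam n)‖ = Real.exp (-(((n : ℝ) + 1) / 2)) := by
      rw [norm_neg, norm_div, norm_one, habs, Real.exp_neg, one_div]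
    have e2 : ‖Qt (lam n)‖ =
        Real.exp (∑ k ∈ (Finset.range M).erase n, β k) := by
      rw [hQt, norm_prod, Real.exp_sum]
      apply Finset.prod_congr rfl
      intro k hk
      rw [hβ, Real.exp_log (hβpos k (Finset.ne_of_mem_erase hk))]
    have e3 : ‖Complex.exp (g (lam n))‖ = Real.exp (∑' j, β (j + M)) := by
      rw [Complex.norm_exp, hgre]
    rw [e1, e2, e3, ← Real.exp_add, ← Real.exp_add]
  -- summability of the shifted tail
  have hsumβM : Summable (fun j => β (j + M)) := by
    have h0 := (Complex.hasSum_re (hlogsum _ hballmem).hasSum).summable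
    apply h0.congr
    intro j
    rw [hβ, Complex.log_re]
  have hγsummable : Summable (fun j => β (j + (n + 1))) := by
    rw [← summable_nat_add_iff 3]
    apply hsumβM.congr
    intro j
    congr 1
    omega
  -- rearranging the sums
  have hβn : β n = 0 := by
    have h0 : (1 : ℂ) - lam n / lam n = 0 := by rw [div_self (hne n)]; ring
    simp only [hβ, h0, norm_zero, Real.log_zero]
  have htotal : ∑ k ∈ (Finset.range M).erase n, β k + ∑' j, β (j + M)
      = ∑ k ∈ Finset.range n, β k + ∑' j, β (j + (n + 1)) := by
    rw [Finset.sum_erase _ hβn]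
    have h2 : ∑ k ∈ Finset.range M, β k
        = ∑ k ∈ Finset.range (n+1), β k + ∑ j ∈ Finset.range 3, β ((n+1) + j) := by
      rw [show M = (n+1) + 3 by omega]
      exact Finset.sum_range_add β (n+1) 3
    have h3 : ∑ j ∈ Finset.range 3, β ((n+1) + j) + ∑' j, β (j + M)
        = ∑' j, β (j + (n + 1)) := by
      have h4 := Summable.sum_add_tsum_nat_add (f := fun j => β (j + (n+1))) 3 hγsummable
      calc ∑ j ∈ Finset.range 3, β ((n+1) + j) + ∑' j, β (j + M)
          = ∑ j ∈ Finset.range 3, β (j + (n+1)) + ∑' j, β ((j + 3) + (n + 1)) := by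
            congr 1
            · exact Finset.sum_congr rfl fun j _ => by congr 1; omega
            · exact tsum_congr fun j => by congr 1; omega
      _ = ∑' j, β (j + (n + 1)) := h4
    rw [h2, Finset.sum_range_succ, hβn, add_zero, add_assoc, h3]
  -- pointwise bounds on β
  have hβbd : ∀ k : ℕ, k ≠ n →
      Real.log (1 - Real.exp (-|((n:ℝ) - k)/2|)) ≤ β k - max (((n:ℝ) - k)/2) 0 ∧
      β k - max (((n:ℝ) - k)/2) 0 ≤ Real.log (1 + Real.exp (-|((n:ℝ) - k)/2|)) := by
    intro k hk
    apply aux_logbound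
    · intro h0
      have : (n:ℝ) = k := by linarith [h0]
      exact hk (Nat.cast_injective this).symm
    · exact hratio n k
  have hβlow : ∀ i, i < n → ((i:ℝ)+1)/2 + auxL i ≤ β (n - 1 - i) := by
    intro i hi
    have hkn : n - 1 - i ≠ n := by omega
    have hcast : ((n:ℝ) - ((n - 1 - i : ℕ) : ℝ))/2 = ((i:ℝ)+1)/2 := by
      have h5 : (n - 1 - i : ℕ) = n - (i+1) := by omega
      rw [h5, Nat.cast_sub (by omega : i + 1 ≤ n)]
      push_cast
      ring
    have h := (hβbd _ hkn).1
    rw [hcast, abs_of_pos (by positivity), max_eq_left (by positivity)] at h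
    unfold auxL auxX
    linarith
  have hβhigh : ∀ i, i < n → β (n - 1 - i) ≤ ((i:ℝ)+1)/2 + auxU i := by
    intro i hi
    have hkn : n - 1 - i ≠ n := by omega
    have hcast : ((n:ℝ) - ((n - 1 - i : ℕ) : ℝ))/2 = ((i:ℝ)+1)/2 := by
      have h5 : (n - 1 - i : ℕ) = n - (i+1) := by omega
      rw [h5, Nat.cast_sub (by omega : i + 1 ≤ n)]
      push_cast
      ring
    have h := (hβbd _ hkn).2
    rw [hcast, abs_of_pos (by positivity), max_eq_left (by positivity)] at h
    unfold auxU auxX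
    linarith
  have hγbd : ∀ j : ℕ, auxL j ≤ β (j + (n + 1)) ∧ β (j + (n + 1)) ≤ auxU j := by
    intro j
    have hkn : j + (n + 1) ≠ n := by omega
    have hcast : ((n:ℝ) - ((j + (n + 1) : ℕ) : ℝ))/2 = -(((j:ℝ)+1)/2) := by
      push_cast
      ring
    have h := hβbd _ hkn
    rw [hcast, abs_neg, abs_of_pos (by positivity : (0:ℝ) < ((j:ℝ)+1)/2),
      max_eq_right (neg_nonpos.2 (by positivity : (0:ℝ) ≤ ((j:ℝ)+1)/2)), sub_zero] at h
    unfold auxL auxU auxX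
    exact h
  -- sum bounds
  have hreflect : ∑ k ∈ Finset.range n, β k = ∑ i ∈ Finset.range n, β (n - 1 - i) :=
    (Finset.sum_range_reflect β n).symm
  have hLs := auxL_summable
  have hUs := auxU_summable
  have hL2 : ∑' j, auxL j ≤ ∑ i ∈ Finset.range n, auxL i := by
    have h := Summable.sum_le_tsum (Finset.range n) (fun j _ => neg_nonneg.2 (auxL_nonpos j)) hLs.neg
    rw [tsum_neg] at h
    have h2 : ∑ i ∈ Finset.range n, -auxL i = -∑ i ∈ Finset.range n, auxL i :=
      Finset.sum_neg_distrib _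
    rw [h2] at h
    linarith
  have hU2 : ∑ i ∈ Finset.range n, auxU i ≤ ∑' j, auxU j :=
    Summable.sum_le_tsum _ (fun j _ => auxU_nonneg j) hUs
  have hL3 : ∑' j, auxL j ≤ ∑' j, β (j + (n + 1)) :=
    Summable.tsum_le_tsum (fun j => (hγbd j).1) hLs hγsummable
  have hU3 : ∑' j, β (j + (n + 1)) ≤ ∑' j, auxU j :=
    Summable.tsum_le_tsum (fun j => (hγbd j).2) hγsummable hUs
  have hgauss := aux_gauss n
  have hrange_low : (n:ℝ) * ((n:ℝ)+1)/4 + ∑ i ∈ Finset.range n, auxL i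
      ≤ ∑ k ∈ Finset.range n, β k := by
    rw [hreflect, ← hgauss, ← Finset.sum_add_distrib]
    exact Finset.sum_le_sum fun i hi => hβlow i (Finset.mem_range.1 hi)
  have hrange_high : ∑ k ∈ Finset.range n, β k
      ≤ (n:ℝ) * ((n:ℝ)+1)/4 + ∑ i ∈ Finset.range n, auxU i := by
    rw [hreflect, ← hgauss, ← Finset.sum_add_distrib]
    exact Finset.sum_le_sum fun i hi => hβhigh i (Finset.mem_range.1 hi)
  -- final assembly
  have hφn : φ (lam n) = (((n:ℝ)+1)/2)^2 := by
    rw [hφ, habs, Real.log_exp, max_eq_left (by positivity)]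
  have hrpow : (‖lam n‖) ^ (-(3:ℝ)/2) = Real.exp ((((n:ℝ)+1)/2) * (-(3:ℝ)/2)) := by
    rw [habs, ← Real.exp_mul]
  have hid : (((n:ℝ)+1)/2) * (-(3:ℝ)/2) + (((n:ℝ)+1)/2)^2
      = -(((n:ℝ)+1)/2) + (n:ℝ) * ((n:ℝ)+1)/4 := by ring
  constructor
  · rw [habsD, hφn, hrpow, ← Real.exp_add, ← Real.exp_add, Real.exp_le_exp, htotal]
    linarith [hL2, hL3, hrange_low]
  · rw [habsD, hφn, hrpow, ← Real.exp_add, ← Real.exp_add, Real.exp_le_exp, htotal]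
    linarith [hU2, hU3, hrange_high]
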